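/- Strong K-step opacity in the sense of Definition 3.1 does not imply strong infinite-step opacity, even if it holds for all K simultaneously: there exists a nondeterministic finite automaton G with secret states X_S such that G is strongly K-step opaque (Definition 3.1) for every non-negative integer K, yet G is not strongly infinite-step opaque. A witness is the automaton with states {0,1,2,3}, events Σ = {a, b, u} with Σ_o = {a, b} and Σ_uo = {u}, initial state 0, secret states X_S = {1}, and transitions 0 --u--> 1, 1 --a--> 2, 2 --b--> 2, 1 --u--> 3, 3 --a--> 2. -/

import Mathlib

namespace SBO

variable {X E : Type}

/-- Extended transition function of an NFA. -/
def ext (δ : X → E → Set X) : X → List E → Set X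
  | x, [] => {x}
  | x, σ :: s => ⋃ y ∈ δ x σ, ext δ y s

/-- A run from `x` to `z` labeled by `s`. -/
def IsRun (δ : X → E → Set X) : X → List E → X → Prop
  | x, [], z => x = z
  | x, σ :: s, z => ∃ y ∈ δ x σ, IsRun δ y s z

/-- A run all of whose states lie in `NS`. -/
def IsNSRun (δ : X → E → Set X) (NS : Set X) : X → List E → X → Prop
  | x, [], z => x = z ∧ x ∈ NS
  | x, σ :: s, z => x ∈ NS ∧ ∃ y ∈ δ x σ, IsNSRun δ NS y s z

/-- Natural projection onto observable events. -/
def proj (Eo : E → Bool) (s : List E) : List E := s.filter Eo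

/-- Strong K-step opacity, Definition 3.1 (suffix of the matching run is non-secret). -/
def KSSO (δ : X → E → Set X) (Eo : E → Bool) (X0 XS : Set X) (K : ℕ) : Prop :=
  ∀ x0 ∈ X0, ∀ s1 s2 : List E, ∀ x1 x2 : X,
    IsRun δ x0 s1 x1 → x1 ∈ XS → IsRun δ x1 s2 x2 → (proj Eo s2).length ≤ K →
    ∃ x0' ∈ X0, ∃ s1' s2' : List E, ∃ x1' x2' : X,
      IsRun δ x0' s1' x1' ∧ IsNSRun δ XSᶜ x1' s2' x2' ∧
      proj Eo s1' = proj Eo s1 ∧ proj Eo s2' = proj Eo s2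

/-- Strong K-step opacity, Definition 3.1b (matching run entirely non-secret). -/
def KSSOb (δ : X → E → Set X) (Eo : E → Bool) (X0 XS : Set X) (K : ℕ) : Prop :=
  ∀ x0 ∈ X0, ∀ s1 s2 : List E, ∀ x1 x2 : X,
    IsRun δ x0 s1 x1 → x1 ∈ XS → IsRun δ x1 s2 x2 → (proj Eo s2).length ≤ K →
    ∃ x0' ∈ X0, ∃ s1' s2' : List E, ∃ x1' x2' : X,
      IsNSRun δ XSᶜ x0' s1' x1' ∧ IsNSRun δ XSᶜ x1' s2' x2' ∧
      proj Eo s1' = proj Eo s1 ∧ proj Eo s2' = proj Eo s2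

/-- Standard current-state opacity. -/
def CSO (δ : X → E → Set X) (Eo : E → Bool) (X0 XS : Set X) : Prop :=
  ∀ x0 ∈ X0, ∀ s : List E, (∃ z ∈ ext δ x0 s, z ∈ XS) →
    ∃ x0' ∈ X0, ∃ s' : List E, proj Eo s' = proj Eo s ∧ ∃ z ∈ ext δ x0' s', z ∈ XSᶜ

/-- Strong current-state opacity. -/
def SCSO (δ : X → E → Set X) (Eo : E → Bool) (X0 XS : Set X) : Prop :=
  ∀ x0 ∈ X0, ∀ s : List E, (∃ z ∈ ext δ x0 s, z ∈ XS) →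
    ∃ x0' ∈ X0 \ XS, ∃ t : List E, ∃ x : X, IsNSRun δ XSᶜ x0' t x ∧ proj Eo t = proj Eo s

/-- Strong initial-state opacity. -/
def SISO (δ : X → E → Set X) (Eo : E → Bool) (X0 XS : Set X) : Prop :=
  ∀ x0 ∈ X0 ∩ XS, ∀ s : List E, (ext δ x0 s).Nonempty →
    ∃ x0' ∈ X0 \ XS, ∃ t : List E, ∃ x : X, IsNSRun δ XSᶜ x0' t x ∧ proj Eo t = proj Eo s

/-- Strong infinite-step opacity. -/
def InfSSO (δ : X → E → Set X) (Eo : E → Bool) (X0 XS : Set X) : Prop :=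
  ∀ x0 ∈ X0, ∀ s1 s2 : List E, (ext δ x0 (s1 ++ s2)).Nonempty →
    (∃ z ∈ ext δ x0 s1, z ∈ XS) →
    ∃ x0' ∈ X0 \ XS, ∃ t : List E, ∃ x : X, IsNSRun δ XSᶜ x0' t x ∧
      proj Eo t = proj Eo (s1 ++ s2)

/-- Observer transition on one observable event (empty set = undefined). -/
def obsStep (δ : X → E → Set X) (Eo : E → Bool) (q : Set X) (σ : E) : Set X :=
  {x' | ∃ x ∈ q, ∃ w : List E, (∀ e ∈ w, Eo e = false) ∧ x' ∈ ext δ x (σ :: w)}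

/-- Initial observer state: unobservable reach of the initial states. -/
def obsInit (δ : X → E → Set X) (Eo : E → Bool) (X0 : Set X) : Set X :=
  {x' | ∃ x ∈ X0, ∃ w : List E, (∀ e ∈ w, Eo e = false) ∧ x' ∈ ext δ x w}

/-- Observer transition extended to observation strings. -/
def obsExt (δ : X → E → Set X) (Eo : E → Bool) : Set X → List E → Set X
  | q, [] => q
  | q, σ :: α => obsExt δ Eo (obsStep δ Eo q σ) α

/-- Synchronous step of `Cc(G, Obs(G))`. -/
def ccStep (δ : X → E → Set X) (Eo : E → Bool) (p p' : X × Set X) : Prop :=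
  ∃ σ : E,
    (Eo σ = true ∧ p'.1 ∈ δ p.1 σ ∧ (obsStep δ Eo p.2 σ).Nonempty ∧
      p'.2 = obsStep δ Eo p.2 σ) ∨
    (Eo σ = false ∧ p'.1 ∈ δ p.1 σ ∧ p'.2 = p.2)

/-- Reachability in `Cc(G, Obs(G))`. -/
def ccReach (δ : X → E → Set X) (Eo : E → Bool) (X0 : Set X) (p : X × Set X) : Prop :=
  ∃ x ∈ obsInit δ Eo X0, Relation.ReflTransGen (ccStep δ Eo) (x, obsInit δ Eo X0) p

/-- Deleting a set of transitions from an NFA. -/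
def delTrans (δ : X → E → Set X) (Edel : Set (X × E × X)) : X → E → Set X :=
  fun x σ => {y ∈ δ x σ | (x, σ, y) ∉ Edel}

/-- Transitions of the non-secret subautomaton (secret states deleted). -/
def δdss (δ : X → E → Set X) (XS : Set X) : X → E → Set X :=
  fun x σ => {y ∈ δ x σ | x ∉ XS ∧ y ∉ XS}

/-- One step of the concurrent composition `Cc(Ĝ, G̃_obs)`. -/
def cc2Step (δ δt : X → E → Set X) (Eo : E → Bool) (p : X × Set X) (σ : E) :
    Set (X × Set X) :=
  if Eo σ then {p' | p'.1 ∈ δ p.1 σ ∧ p'.2 = obsStep δt Eo p.2 σ}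
  else {p' | p'.1 ∈ δ p.1 σ ∧ p'.2 = p.2}

/-- Extended transition function of `Cc(Ĝ, G̃_obs)`. -/
def cc2Ext (δ δt : X → E → Set X) (Eo : E → Bool) : (X × Set X) → List E → Set (X × Set X)
  | p, [] => {p}
  | p, σ :: s => ⋃ p' ∈ cc2Step δ δt Eo p σ, cc2Ext δ δt Eo p' s

/-- Initial states of `Cc(Ĝ, G̃_obs)`. -/
def ccInit (δ : X → E → Set X) (Eo : E → Bool) (X0 XS : Set X) : Set (X × Set X) :=
  {p | ∃ α : List E, (∀ e ∈ α, Eo e = true) ∧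
    p.1 ∈ XS ∩ obsExt δ Eo (obsInit δ Eo X0) α ∧
    p.2 = obsExt δ Eo (obsInit δ Eo X0) α ∩ XSᶜ}

end SBO

open SBO

/-- The witness automaton of Remark 3.5: states 0,1,2,3; events a = 0, b = 1, u = 2;
transitions 0 --u--> 1, 1 --a--> 2, 2 --b--> 2, 1 --u--> 3, 3 --a--> 2. -/
def δ8 : Fin 4 → Fin 3 → Set (Fin 4) := fun x e =>
  {y | (x = 0 ∧ e = 2 ∧ y = 1) ∨ (x = 1 ∧ e = 0 ∧ y = 2) ∨ (x = 2 ∧ e = 1 ∧ y = 2) ∨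
       (x = 1 ∧ e = 2 ∧ y = 3) ∨ (x = 3 ∧ e = 0 ∧ y = 2)}

abbrev Eo8 : Fin 3 → Bool := fun e => decide (e ≠ 2)

lemma reach1 : ∀ (s : List (Fin 3)) (x : Fin 4), IsRun δ8 x s 1 →
    (x = 0 ∧ s = [2]) ∨ (x = 1 ∧ s = []) := by
  intro s
  induction s with
  | nil => intro x h; right; exact ⟨h, rfl⟩
  | cons σ rest ih =>
    intro x h
    obtain ⟨y, hy, hr⟩ := h
    simp only [δ8, Set.mem_setOf_eq] at hy
    rcases hy with ⟨hx, hσ, hy⟩ | ⟨hx, hσ, hy⟩ | ⟨hx, hσ, hy⟩ | ⟨hx, hσ, hy⟩ | ⟨hx, hσ, hy⟩ <;>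
      subst hx hσ hy <;> rcases ih _ hr with ⟨h1, h2⟩ | ⟨h1, h2⟩ <;>
      simp_all

lemma run2 : ∀ (s : List (Fin 3)) (z : Fin 4), IsRun δ8 2 s z →
    ∃ n, proj Eo8 s = List.replicate n (1 : Fin 3) := by
  intro s
  induction s with
  | nil => intro z h; exact ⟨0, rfl⟩
  | cons σ rest ih =>
    intro z h
    obtain ⟨y, hy, hr⟩ := h
    simp only [δ8, Set.mem_setOf_eq] at hy
    rcases hy with ⟨hx, hσ, hy⟩ | ⟨hx, hσ, hy⟩ | ⟨hx, hσ, hy⟩ | ⟨hx, hσ, hy⟩ | ⟨hx, hσ, hy⟩ <;>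
      first
      | exact absurd hx (by decide)
      | (subst hσ hy
         obtain ⟨n, hn⟩ := ih _ hr
         exact ⟨n + 1, by simp [proj, List.filter, List.replicate]; exact hn⟩)

lemma run3 : ∀ (s : List (Fin 3)) (z : Fin 4), IsRun δ8 3 s z →
    proj Eo8 s = [] ∨ ∃ n, proj Eo8 s = (0 : Fin 3) :: List.replicate n (1 : Fin 3) := by
  intro s z h
  cases s with
  | nil => left; rfl
  | cons σ rest =>
    obtain ⟨y, hy, hr⟩ := h
    simp only [δ8, Set.mem_setOf_eq] at hy
    rcases hy with ⟨hx, hσ, hy⟩ | ⟨hx, hσ, hy⟩ | ⟨hx, hσ, hy⟩ | ⟨hx, hσ, hy⟩ | ⟨hx, hσ, hy⟩ <;>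
      first
      | exact absurd hx (by decide)
      | (subst hσ hy
         obtain ⟨n, hn⟩ := run2 _ _ hr
         exact Or.inr ⟨n, by simp [proj, List.filter]; exact hn⟩)

lemma run1 : ∀ (s : List (Fin 3)) (z : Fin 4), IsRun δ8 1 s z →
    proj Eo8 s = [] ∨ ∃ n, proj Eo8 s = (0 : Fin 3) :: List.replicate n (1 : Fin 3) := by
  intro s z h
  cases s with
  | nil => left; rfl
  | cons σ rest =>
    obtain ⟨y, hy, hr⟩ := h
    simp only [δ8, Set.mem_setOf_eq] at hy
    rcases hy with ⟨hx, hσ, hy⟩ | ⟨hx, hσ, hy⟩ | ⟨hx, hσ, hy⟩ | ⟨hx, hσ, hy⟩ | ⟨hx, hσ, hy⟩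
    · exact absurd hx (by decide)
    · subst hσ hy
      obtain ⟨n, hn⟩ := run2 _ _ hr
      exact Or.inr ⟨n, by simp [proj, List.filter]; exact hn⟩
    · exact absurd hx (by decide)
    · subst hσ hy
      have := run3 _ _ hr
      simpa [proj, List.filter] using this
    · exact absurd hx (by decide)

lemma nsrun2 : ∀ n : ℕ,
    IsNSRun δ8 ({1} : Set (Fin 4))ᶜ 2 (List.replicate n (1 : Fin 3)) 2 := by
  intro n
  induction n with
  | zero => exact ⟨rfl, by simp⟩
  | succ n ih =>
    refine ⟨by simp, 2, ?_, ih⟩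
    simp [δ8]

/-- the witness automaton is K-SSO (Definition 3.1) for every K,
yet is not strongly infinite-step opaque. -/
theorem KSSO_not_implies_InfSSO :
    (∀ K : ℕ, KSSO δ8 (fun e => decide (e ≠ 2)) {0} {1} K) ∧
      ¬ InfSSO δ8 (fun e => decide (e ≠ 2)) {0} {1} := by
  constructor
  · intro K x0 hx0 s1 s2 x1 x2 hr1 hx1 hr2 _
    simp only [Set.mem_singleton_iff] at hx0 hx1
    subst hx0 hx1
    have hs1 : s1 = [2] := by
      rcases reach1 _ _ hr1 with ⟨_, h⟩ | ⟨h, _⟩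
      · exact h
      · exact absurd h (by decide)
    subst hs1
    have hrun02 : IsRun δ8 0 [2, 2] 3 :=
      ⟨1, by simp [δ8], 3, by simp [δ8], rfl⟩
    rcases run1 _ _ hr2 with h | ⟨n, hn⟩
    · exact ⟨0, rfl, [2, 2], [], 3, 3, hrun02, ⟨rfl, by simp⟩, by decide, by
        rw [h]; rfl⟩
    · refine ⟨0, rfl, [2, 2], (0 : Fin 3) :: List.replicate n 1, 3, 2, hrun02,
        ⟨by simp, 2, by simp [δ8], nsrun2 n⟩, by decide, ?_⟩
      rw [hn]
      show List.filter Eo8 _ = _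
      rw [List.filter_eq_self.mpr]
      intro e he
      rcases List.mem_cons.mp he with h | h
      · subst h; decide
      · rw [List.eq_of_mem_replicate h]; decide
  · intro h
    obtain ⟨x0', hx0', t, x, hns, hproj⟩ :=
      h 0 rfl [2] [0]
        ⟨2, by
          show (2 : Fin 4) ∈ ⋃ y ∈ δ8 0 2, ext δ8 y [0]
          simp only [Set.mem_iUnion]
          exact ⟨1, by simp [δ8], by
            show (2 : Fin 4) ∈ ⋃ y ∈ δ8 1 0, ext δ8 y []
            simp only [Set.mem_iUnion]
            exact ⟨2, by simp [δ8], rfl⟩⟩⟩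
        ⟨1, by
          show (1 : Fin 4) ∈ ⋃ y ∈ δ8 0 2, ext δ8 y []
          simp only [Set.mem_iUnion]
          exact ⟨1, by simp [δ8], rfl⟩, rfl⟩
    simp only [Set.mem_diff, Set.mem_singleton_iff] at hx0'
    obtain ⟨hx0'', _⟩ := hx0'
    subst hx0''
    have hproj' : proj (fun e => decide (e ≠ 2)) t = [(0 : Fin 3)] := by
      rw [hproj]; decide
    cases t with
    | nil => exact absurd hproj' (by decide)
    | cons σ rest =>
      obtain ⟨_, y, hy, hns'⟩ := hns
      simp only [δ8, Set.mem_setOf_eq] at hy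
      rcases hy with ⟨hx, hσ, hy⟩ | ⟨hx, hσ, hy⟩ | ⟨hx, hσ, hy⟩ | ⟨hx, hσ, hy⟩ | ⟨hx, hσ, hy⟩
      · subst hy
        cases rest with
        | nil => exact absurd hns'.2 (by simp)
        | cons τ r => exact absurd hns'.1 (by simp)
      all_goals exact absurd hx (by decide)
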